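/- Let k, n, m be natural numbers with n ≥ 1, m ≥ 1 and k − n − m ≥ 1. Define A(b₁,b₂) = Σ_{i=0}^{m−1} (−1)^{i+m−1} (k−i−n−2)! b₁^{k−i−2} b₂^i / (i! (m−1−i)! (k−n−m−1)! (k−i−2)!) and B(b₁,b₂) = Σ_{i=0}^{k−n−m−1} (−1)^m (k−n−i−2)! (b₁−b₂)^{k−i−2} b₂^i / (i! (k−n−m−1−i)! (m−1)! (k−i−2)!). Then for all real z₁ > 0, z₂ > 0: ∫₀^∞ ∫₀^∞ e^{−b₁z₁ − b₂z₂} [ A(b₁,b₂) + 𝟙_{b₁ > b₂} B(b₁,b₂) ] db₁ db₂ = 1 / (z₁^n z₂^m (z₁+z₂)^{k−n−m}). -/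

import Mathlib

open MeasureTheory

section Helpers

open Real Set Finset

lemma lap_integrable (j : ℕ) {z : ℝ} (hz : 0 < z) :
    IntegrableOn (fun t : ℝ => t ^ j * Real.exp (-(z * t))) (Ioi 0) := by
  have h := integrableOn_rpow_mul_exp_neg_mul_rpow (p := 1) (s := j)
    ((neg_lt_zero.mpr one_pos).trans_le (Nat.cast_nonneg j)) one_pos hz
  refine h.congr_fun (fun x hx => ?_) measurableSet_Ioi
  beta_reduce
  rw [Real.rpow_natCast, Real.rpow_one, neg_mul]

lemma lap_eval (j : ℕ) {z : ℝ} (hz : 0 < z) :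
    ∫ t in Ioi (0:ℝ), t ^ j * Real.exp (-(z * t)) = (j.factorial : ℝ) / z ^ (j+1) := by
  have h := Real.integral_rpow_mul_exp_neg_mul_Ioi (a := (j:ℝ)+1) (by positivity) hz
  rw [show ((j:ℝ)+1)-1 = (j:ℝ) by ring] at h
  calc ∫ t in Ioi (0:ℝ), t ^ j * Real.exp (-(z * t))
      = ∫ t in Ioi (0:ℝ), t ^ ((j:ℝ)) * Real.exp (-(z * t)) := by
        refine (setIntegral_congr_fun measurableSet_Ioi (fun x hx => ?_)).symm
        rw [Real.rpow_natCast]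
    _ = (1/z) ^ ((j:ℝ)+1) * Real.Gamma ((j:ℝ)+1) := h
    _ = (j.factorial : ℝ) / z ^ (j+1) := by
        rw [Real.Gamma_nat_eq_factorial,
          show ((j:ℝ)+1) = ((j+1 : ℕ) : ℝ) by push_cast; ring, Real.rpow_natCast,
          div_pow, one_pow]
        ring

lemma lap_shift (a : ℕ) {z : ℝ} (hz : 0 < z) {c : ℝ} (hc : 0 ≤ c) :
    ∫ t in Ioi (0:ℝ), (if c < t then (t - c)^a else 0) * Real.exp (-(z*t))
      = Real.exp (-(z*c)) * ((a.factorial : ℝ)/z^(a+1)) := by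
  have h1 : ∀ t : ℝ, (if c < t then (t-c)^a else 0) * Real.exp (-(z*t))
      = (Set.Ioi c).indicator (fun t => (t-c)^a * Real.exp (-(z*t))) t := by
    intro t
    simp only [Set.indicator_apply, Set.mem_Ioi]
    split_ifs with h <;> simp
  simp only [h1]
  rw [setIntegral_indicator measurableSet_Ioi, Set.Ioi_inter_Ioi,
    sup_eq_right.mpr hc]
  rw [← integral_indicator measurableSet_Ioi,
    ← integral_add_right_eq_self (fun t => (Set.Ioi c).indicator
      (fun t => (t-c)^a * Real.exp (-(z*t))) t) c]
  have h2 : ∀ t : ℝ, (Set.Ioi c).indicator (fun t => (t-c)^a * Real.exp (-(z*t))) (t+c)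
      = (Set.Ioi 0).indicator (fun u => u^a * Real.exp (-(z*u)) * Real.exp (-(z*c))) t := by
    intro t
    simp only [Set.indicator_apply, Set.mem_Ioi]
    simp only [lt_add_iff_pos_left]
    split_ifs with h
    · rw [add_sub_cancel_right, mul_assoc, ← Real.exp_add]; ring_nf
    · rfl
  simp only [h2]
  rw [integral_indicator measurableSet_Ioi, integral_mul_const, lap_eval a hz, mul_comm]

/-- The right-hand side of the polynomial partial fraction identity. -/
noncomputable def FF (M P : ℕ) (x y : ℝ) : ℝ :=
  (∑ i ∈ Finset.range (M+1),
    (-1:ℝ)^(M-i) * ((M+P-i).choose P : ℝ) * x^i * y^(M-i) * (x+y)^(P+1))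
  + (-1:ℝ)^(M+1) * ∑ i ∈ Finset.range (P+1),
    ((M+P-i).choose M : ℝ) * x^i * y^(M+1) * (x+y)^(P-i)

lemma Fstep (M P : ℕ) (x y : ℝ) :
    FF (M+1) (P+1) x y = (x+y) * FF (M+1) P x y - y * FF M (P+1) x y := by
  have sub1 : ∑ i ∈ Finset.range (M+2),
        (-1:ℝ)^(M+1-i) * ((M+1+(P+1)-i).choose (P+1) : ℝ) * x^i * y^(M+1-i) * (x+y)^(P+2)
      = (x+y) * ∑ i ∈ Finset.range (M+2),
        (-1:ℝ)^(M+1-i) * ((M+1+P-i).choose P : ℝ) * x^i * y^(M+1-i) * (x+y)^(P+1)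
      - y * ∑ i ∈ Finset.range (M+1),
        (-1:ℝ)^(M-i) * ((M+(P+1)-i).choose (P+1) : ℝ) * x^i * y^(M-i) * (x+y)^(P+2) := by
    have hB : (∑ i ∈ Finset.range (M+1),
          (-1:ℝ)^(M-i) * ((M+(P+1)-i).choose (P+1) : ℝ) * x^i * y^(M-i) * (x+y)^(P+2))
        = ∑ i ∈ Finset.range (M+2),
          (-1:ℝ)^(M-i) * ((M+(P+1)-i).choose (P+1) : ℝ) * x^i * y^(M-i) * (x+y)^(P+2) := by
      rw [Finset.sum_range_succ (n := M+1)]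
      rw [show M+(P+1)-(M+1) = P by omega, Nat.choose_eq_zero_of_lt (by omega)]
      simp
    rw [hB, Finset.mul_sum, Finset.mul_sum, ← Finset.sum_sub_distrib]
    refine Finset.sum_congr rfl fun i hi => ?_
    have hi' : i < M + 2 := Finset.mem_range.mp hi
    rcases (by omega : i ≤ M ∨ i = M+1) with h | rfl
    · rw [show M+1+(P+1)-i = (M+1+P-i)+1 by omega, show M+(P+1)-i = M+1+P-i by omega,
        show M+1-i = (M-i)+1 by omega, Nat.choose_succ_succ]
      push_cast
      ring
    · rw [show M+1+(P+1)-(M+1) = P+1 by omega, show M+1+P-(M+1) = P by omega,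
        show M+(P+1)-(M+1) = P by omega, show M+1-(M+1) = 0 by omega,
        show M-(M+1) = 0 by omega, Nat.choose_self, Nat.choose_self,
        Nat.choose_eq_zero_of_lt (by omega)]
      push_cast
      ring
  have sub2 : ∑ i ∈ Finset.range (P+2),
        ((M+1+(P+1)-i).choose (M+1) : ℝ) * x^i * y^(M+2) * (x+y)^(P+1-i)
      = (x+y) * ∑ i ∈ Finset.range (P+1),
        ((M+1+P-i).choose (M+1) : ℝ) * x^i * y^(M+2) * (x+y)^(P-i)
      + y * ∑ i ∈ Finset.range (P+2),
        ((M+(P+1)-i).choose M : ℝ) * x^i * y^(M+1) * (x+y)^(P+1-i) := by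
    have hA : (x+y) * ∑ i ∈ Finset.range (P+1),
          ((M+1+P-i).choose (M+1) : ℝ) * x^i * y^(M+2) * (x+y)^(P-i)
        = ∑ i ∈ Finset.range (P+2),
          (x+y) * (((M+1+P-i).choose (M+1) : ℝ) * x^i * y^(M+2) * (x+y)^(P-i)) := by
      rw [Finset.sum_range_succ (n := P+1)]
      rw [show M+1+P-(P+1) = M by omega, Nat.choose_eq_zero_of_lt (by omega)]
      simp [Finset.mul_sum]
    rw [hA, Finset.mul_sum, ← Finset.sum_add_distrib]
    refine Finset.sum_congr rfl fun i hi => ?_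
    have hi' : i < P + 2 := Finset.mem_range.mp hi
    rcases (by omega : i ≤ P ∨ i = P+1) with h | rfl
    · rw [show M+1+(P+1)-i = (M+(P+1)-i)+1 by omega, show M+1+P-i = M+(P+1)-i by omega,
        show P+1-i = (P-i)+1 by omega, Nat.choose_succ_succ]
      push_cast
      ring
    · rw [show M+1+(P+1)-(P+1) = M+1 by omega, show M+1+P-(P+1) = M by omega,
        show M+(P+1)-(P+1) = M by omega, show P+1-(P+1) = 0 by omega,
        Nat.choose_self, Nat.choose_self, Nat.choose_eq_zero_of_lt (by omega)]
      push_cast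
      ring
  unfold FF
  simp only [show M+1+1 = M+2 from rfl, show P+1+1 = P+2 from rfl]
  linear_combination sub1 + ((-1:ℝ)^(M+2)) * sub2

lemma key_base0 (P : ℕ) (x y : ℝ) : x^(0+P+1) = FF 0 P x y := by
  have hg := geom_sum₂_mul x (x+y) (P+1)
  simp only [Nat.add_sub_cancel] at hg
  unfold FF
  have h2 : ∑ i ∈ Finset.range (P+1), ((0+P-i).choose 0 : ℝ) * x^i * y^(0+1) * (x+y)^(P-i)
      = (∑ i ∈ Finset.range (P+1), x^i * (x+y)^(P-i)) * y := by
    rw [Finset.sum_mul]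
    refine Finset.sum_congr rfl fun i hi => ?_
    rw [Nat.choose_zero_right]
    push_cast
    ring
  rw [h2]
  norm_num [Nat.choose_self]
  linear_combination -hg

lemma key_baseP0 (M : ℕ) (x y : ℝ) : x^(M+0+1) = FF M 0 x y := by
  have hg := geom_sum₂_mul x (-y) (M+1)
  simp only [Nat.add_sub_cancel] at hg
  unfold FF
  have h1 : ∑ i ∈ Finset.range (M+1),
        (-1:ℝ)^(M-i) * ((M+0-i).choose 0 : ℝ) * x^i * y^(M-i) * (x+y)^(0+1)
      = (∑ i ∈ Finset.range (M+1), x^i * (-y)^(M-i)) * (x+y) := by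
    rw [Finset.sum_mul]
    refine Finset.sum_congr rfl fun i hi => ?_
    rw [Nat.choose_zero_right, neg_pow y (M-i)]
    push_cast
    ring
  rw [h1]
  have hneg : (-y:ℝ)^(M+1) = (-1:ℝ)^(M+1) * y^(M+1) := by rw [neg_pow]
  norm_num [Nat.choose_self]
  linear_combination -hg + hneg

lemma key (M : ℕ) : ∀ (P : ℕ) (x y : ℝ), x^(M+P+1) = FF M P x y := by
  induction M with
  | zero => intro P x y; exact key_base0 P x y
  | succ M ihM =>
    intro P
    induction P with
    | zero => intro x y; exact key_baseP0 (M+1) x y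
    | succ P ihP =>
      intro x y
      have e1 : x^(M+1+(P+1)+1) = (x+y) * FF (M+1) P x y - y * FF M (P+1) x y := by
        rw [← ihP x y, ← ihM (P+1) x y]
        ring
      rw [e1, Fstep]

noncomputable def cA (N M P i : ℕ) : ℝ :=
  (-1:ℝ)^(i+M) * ((M+P-i).factorial : ℝ) /
    ((i.factorial:ℝ) * ((M-i).factorial:ℝ) * (P.factorial:ℝ) * ((N+M+P+1-i).factorial:ℝ))

noncomputable def cB (N M P i : ℕ) : ℝ :=
  (-1:ℝ)^(M+1) * ((M+P-i).factorial : ℝ) /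
    ((i.factorial:ℝ) * ((P-i).factorial:ℝ) * (M.factorial:ℝ) * ((N+M+P+1-i).factorial:ℝ))

lemma final_alg (N M P : ℕ) (z₁ z₂ : ℝ) (h₁ : 0 < z₁) (h₂ : 0 < z₂) :
    (∑ i ∈ Finset.range (M+1),
      cA N M P i * (((N+M+P+1-i).factorial:ℝ)/z₁^((N+M+P+1-i)+1)) * ((i.factorial:ℝ)/z₂^(i+1)))
    + ∑ i ∈ Finset.range (P+1),
      cB N M P i * (((N+M+P+1-i).factorial:ℝ)/z₁^((N+M+P+1-i)+1)) * ((i.factorial:ℝ)/(z₁+z₂)^(i+1))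
    = 1 / (z₁^(N+1) * z₂^(M+1) * (z₁+z₂)^(P+1)) := by
  have hz12 : (0:ℝ) < z₁ + z₂ := by linarith
  have hkey := key M P z₁ z₂
  have hD : (1:ℝ)/(z₁^(N+1) * z₂^(M+1) * (z₁+z₂)^(P+1))
      = FF M P z₁ z₂ / (z₁^(N+M+P+2) * z₂^(M+1) * (z₁+z₂)^(P+1)) := by
    rw [← hkey, div_eq_div_iff (by positivity) (by positivity)]
    rw [show N+M+P+2 = (N+1)+(M+P+1) by omega, pow_add]
    ring
  rw [hD]
  unfold FF
  rw [add_div]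
  congr 1
  · rw [Finset.sum_div]
    refine Finset.sum_congr rfl fun i hi => ?_
    have hiM : i ≤ M := by have := Finset.mem_range.mp hi; omega
    have hch : ((M+P-i).choose P : ℝ) * (P.factorial:ℝ) * ((M-i).factorial:ℝ)
        = ((M+P-i).factorial:ℝ) := by
      have h := Nat.choose_mul_factorial_mul_factorial (show P ≤ M+P-i by omega)
      rw [show M+P-i-P = M-i by omega] at h
      exact_mod_cast congrArg (Nat.cast : ℕ → ℝ) h
    have hsign : (-1:ℝ)^(i+M) = (-1:ℝ)^(M-i) := by
      rw [show i+M = (M-i)+2*i by omega, pow_add, pow_mul]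
      norm_num
    have hz₁pow : z₁^(N+M+P+2) = z₁^((N+M+P+1-i)+1) * z₁^i := by
      rw [← pow_add]; congr 1; omega
    have hz₂pow : z₂^(M+1) = z₂^(i+1) * z₂^(M-i) := by
      rw [← pow_add]; congr 1; omega
    rw [cA, ← hsign, ← hch, hz₁pow, hz₂pow]
    have hf1 : ((i.factorial:ℝ)) ≠ 0 := by positivity
    have hf2 : (((M-i).factorial:ℝ)) ≠ 0 := by positivity
    have hf3 : ((P.factorial:ℝ)) ≠ 0 := by positivity
    have hf4 : (((N+M+P+1-i).factorial:ℝ)) ≠ 0 := by positivity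
    field_simp
  · rw [Finset.mul_sum, Finset.sum_div]
    refine Finset.sum_congr rfl fun i hi => ?_
    have hiP : i ≤ P := by have := Finset.mem_range.mp hi; omega
    have hch : ((M+P-i).choose M : ℝ) * (M.factorial:ℝ) * ((P-i).factorial:ℝ)
        = ((M+P-i).factorial:ℝ) := by
      have h := Nat.choose_mul_factorial_mul_factorial (show M ≤ M+P-i by omega)
      rw [show M+P-i-M = P-i by omega] at h
      exact_mod_cast congrArg (Nat.cast : ℕ → ℝ) h
    have hz₁pow : z₁^(N+M+P+2) = z₁^((N+M+P+1-i)+1) * z₁^i := by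
      rw [← pow_add]; congr 1; omega
    have hspow : (z₁+z₂)^(P+1) = (z₁+z₂)^(i+1) * (z₁+z₂)^(P-i) := by
      rw [← pow_add]; congr 1; omega
    rw [cB, ← hch, hz₁pow, hspow]
    have hf1 : ((i.factorial:ℝ)) ≠ 0 := by positivity
    have hf2 : (((P-i).factorial:ℝ)) ≠ 0 := by positivity
    have hf3 : ((M.factorial:ℝ)) ≠ 0 := by positivity
    have hf4 : (((N+M+P+1-i).factorial:ℝ)) ≠ 0 := by positivity
    field_simp

variable {z₁ z₂ : ℝ}

lemma termB_prod_integrable (a j : ℕ) (h₁ : 0 < z₁) (h₂ : 0 < z₂) (c : ℝ) :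
    Integrable (fun q : ℝ × ℝ =>
        ((if q.2 < q.1 then (q.1 - q.2)^a else 0) * Real.exp (-(z₁*q.1)))
          * (c * (q.2^j * Real.exp (-(z₂*q.2)))))
      ((volume.restrict (Ioi 0)).prod (volume.restrict (Ioi 0))) := by
  have hmeas : AEStronglyMeasurable (fun q : ℝ × ℝ =>
      ((if q.2 < q.1 then (q.1 - q.2)^a else 0) * Real.exp (-(z₁*q.1)))
        * (c * (q.2^j * Real.exp (-(z₂*q.2)))))
      ((volume.restrict (Ioi 0)).prod (volume.restrict (Ioi 0))) := by
    refine Measurable.aestronglyMeasurable ?_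
    refine Measurable.mul (Measurable.mul ?_ ?_) ?_
    · exact Measurable.ite (measurableSet_lt measurable_snd measurable_fst)
        ((measurable_fst.sub measurable_snd).pow_const a) measurable_const
    · exact ((measurable_fst.const_mul z₁).neg).exp
    · exact (((measurable_snd.pow_const j).mul
        (((measurable_snd.const_mul z₂).neg).exp))).const_mul c
  have hψ : Integrable (fun q : ℝ × ℝ =>
      (q.1^a * Real.exp (-(z₁*q.1))) * (|c| * (q.2^j * Real.exp (-(z₂*q.2)))))
      ((volume.restrict (Ioi 0)).prod (volume.restrict (Ioi 0))) :=
    (lap_integrable a h₁).mul_prod ((lap_integrable j h₂).const_mul |c|)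
  refine hψ.mono' hmeas ?_
  rw [Measure.prod_restrict]
  filter_upwards [ae_restrict_mem (measurableSet_Ioi.prod measurableSet_Ioi)] with q hq
  obtain ⟨hq1, hq2⟩ := hq
  simp only [Set.mem_Ioi] at hq1 hq2
  have h1 : |(if q.2 < q.1 then (q.1-q.2)^a else 0)| ≤ q.1^a := by
    split_ifs with h
    · rw [abs_of_nonneg (pow_nonneg (by linarith) a)]
      exact pow_le_pow_left₀ (by linarith) (by linarith) a
    · simpa using pow_nonneg hq1.le a
  have heq : ‖((if q.2 < q.1 then (q.1 - q.2)^a else 0) * Real.exp (-(z₁*q.1)))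
      * (c * (q.2^j * Real.exp (-(z₂*q.2))))‖
      = (|(if q.2 < q.1 then (q.1 - q.2)^a else 0)| * Real.exp (-(z₁*q.1)))
        * (|c| * (q.2^j * Real.exp (-(z₂*q.2)))) := by
    rw [Real.norm_eq_abs, abs_mul, abs_mul, abs_mul, abs_mul,
      abs_of_pos (Real.exp_pos _), abs_of_pos (Real.exp_pos _),
      abs_of_nonneg (pow_nonneg hq2.le j)]
  rw [heq]
  have hc : 0 ≤ |c| * (q.2^j * Real.exp (-(z₂ * q.2))) :=
    mul_nonneg (abs_nonneg c) (mul_nonneg (pow_nonneg hq2.le j) (Real.exp_pos _).le)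
  exact mul_le_mul_of_nonneg_right
    (mul_le_mul_of_nonneg_right h1 (Real.exp_pos _).le) hc

lemma termB_eval (a j : ℕ) (h₁ : 0 < z₁) (h₂ : 0 < z₂) (c : ℝ) :
    ∫ b₁ in Ioi (0:ℝ), ∫ b₂ in Ioi (0:ℝ),
        ((if b₂ < b₁ then (b₁ - b₂)^a else 0) * Real.exp (-(z₁*b₁)))
          * (c * (b₂^j * Real.exp (-(z₂*b₂))))
      = c * ((a.factorial:ℝ)/z₁^(a+1)) * ((j.factorial:ℝ)/(z₁+z₂)^(j+1)) := by
  have hz12 : (0:ℝ) < z₁ + z₂ := by linarith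
  have hint := termB_prod_integrable a j h₁ h₂ c
  rw [integral_integral_swap (by exact hint)]
  have inner_eq : ∀ b₂ ∈ Ioi (0:ℝ),
      (∫ b₁ in Ioi (0:ℝ), ((if b₂ < b₁ then (b₁ - b₂)^a else 0) * Real.exp (-(z₁*b₁)))
        * (c * (b₂^j * Real.exp (-(z₂*b₂)))))
      = (c * ((a.factorial:ℝ)/z₁^(a+1))) * (b₂^j * Real.exp (-((z₁+z₂)*b₂))) := by
    intro b₂ hb₂
    rw [integral_mul_const, lap_shift a h₁ (le_of_lt hb₂)]
    have hexp : Real.exp (-(z₁*b₂)) * Real.exp (-(z₂*b₂)) = Real.exp (-((z₁+z₂)*b₂)) := by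
      rw [← Real.exp_add]; ring_nf
    rw [← hexp]; ring
  rw [setIntegral_congr_fun measurableSet_Ioi inner_eq, MeasureTheory.integral_const_mul,
    lap_eval j hz12]

end Helpers

open Real Set Finset in
theorem inverse_laplace_kontsevich (k n m : ℕ) (hn : 1 ≤ n) (hm : 1 ≤ m)
    (hk : 1 ≤ k - n - m) (z₁ z₂ : ℝ) (h₁ : 0 < z₁) (h₂ : 0 < z₂) :
    ∫ b₁ in Set.Ioi (0:ℝ), ∫ b₂ in Set.Ioi (0:ℝ),
      Real.exp (-b₁*z₁ - b₂*z₂) *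
        ((∑ i ∈ Finset.range m,
            (-1:ℝ)^(i+m-1) * ((k-i-n-2).factorial : ℝ) * b₁^(k-i-2) * b₂^i /
              ((i.factorial : ℝ) * ((m-1-i).factorial : ℝ) *
                ((k-n-m-1).factorial : ℝ) * ((k-i-2).factorial : ℝ))) +
          (if b₂ < b₁ then
            ∑ i ∈ Finset.range (k-n-m),
              (-1:ℝ)^m * ((k-n-i-2).factorial : ℝ) * (b₁-b₂)^(k-i-2) * b₂^i /
                ((i.factorial : ℝ) * ((k-n-m-1-i).factorial : ℝ) *
                  ((m-1).factorial : ℝ) * ((k-i-2).factorial : ℝ))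
           else 0)) =
      1 / (z₁^n * z₂^m * (z₁+z₂)^(k-n-m)) := by
  obtain ⟨N, rfl⟩ : ∃ N, n = N + 1 := ⟨n-1, by omega⟩
  obtain ⟨M, rfl⟩ : ∃ M, m = M + 1 := ⟨m-1, by omega⟩
  obtain ⟨P, rfl⟩ : ∃ P, k = N + M + P + 3 := ⟨k-N-M-3, by omega⟩
  have hz12 : (0:ℝ) < z₁ + z₂ := by linarith
  have hfun : ∀ b₁ b₂ : ℝ,
      Real.exp (-b₁*z₁ - b₂*z₂) *
        ((∑ i ∈ Finset.range (M+1),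
            (-1:ℝ)^(i+(M+1)-1) * ((N+M+P+3-i-(N+1)-2).factorial : ℝ) * b₁^(N+M+P+3-i-2) * b₂^i /
              ((i.factorial : ℝ) * (((M+1)-1-i).factorial : ℝ) *
                ((N+M+P+3-(N+1)-(M+1)-1).factorial : ℝ) * ((N+M+P+3-i-2).factorial : ℝ))) +
          (if b₂ < b₁ then
            ∑ i ∈ Finset.range (N+M+P+3-(N+1)-(M+1)),
              (-1:ℝ)^(M+1) * ((N+M+P+3-(N+1)-i-2).factorial : ℝ) * (b₁-b₂)^(N+M+P+3-i-2) * b₂^i /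
                ((i.factorial : ℝ) * ((N+M+P+3-(N+1)-(M+1)-1-i).factorial : ℝ) *
                  (((M+1)-1).factorial : ℝ) * ((N+M+P+3-i-2).factorial : ℝ))
           else 0))
      = (∑ i ∈ Finset.range (M+1),
          (cA N M P i * (b₁^(N+M+P+1-i) * Real.exp (-(z₁*b₁)))) * (b₂^i * Real.exp (-(z₂*b₂))))
        + ∑ i ∈ Finset.range (P+1),
          ((if b₂ < b₁ then (b₁-b₂)^(N+M+P+1-i) else 0) * Real.exp (-(z₁*b₁)))
            * (cB N M P i * (b₂^i * Real.exp (-(z₂*b₂)))) := by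
    intro b₁ b₂
    have hexp : Real.exp (-b₁*z₁ - b₂*z₂) = Real.exp (-(z₁*b₁)) * Real.exp (-(z₂*b₂)) := by
      rw [← Real.exp_add]; ring_nf
    rw [hexp, mul_add]
    congr 1
    · rw [Finset.mul_sum]
      refine Finset.sum_congr rfl fun i hi => ?_
      have hiM : i ≤ M := by have := Finset.mem_range.mp hi; omega
      rw [show i+(M+1)-1 = i+M by omega, show N+M+P+3-i-(N+1)-2 = M+P-i by omega,
        show N+M+P+3-i-2 = N+M+P+1-i by omega, show (M+1)-1-i = M-i by omega,
        show N+M+P+3-(N+1)-(M+1)-1 = P by omega, cA]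
      ring
    · rw [show N+M+P+3-(N+1)-(M+1) = P+1 by omega]
      by_cases hbb : b₂ < b₁
      · rw [if_pos hbb, Finset.mul_sum]
        refine Finset.sum_congr rfl fun i hi => ?_
        have hiP : i ≤ P := by have := Finset.mem_range.mp hi; omega
        rw [if_pos hbb, show N+M+P+3-(N+1)-i-2 = M+P-i by omega,
          show N+M+P+3-i-2 = N+M+P+1-i by omega,
          show P+1-1-i = P-i by omega, show (M+1)-1 = M by omega, cB]
        ring
      · rw [if_neg hbb, mul_zero]
        symm
        refine Finset.sum_eq_zero fun i hi => ?_
        rw [if_neg hbb, zero_mul, zero_mul]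
  simp only [hfun]
  have hinner : ∀ b₁ : ℝ,
      (∫ b₂ in Ioi (0:ℝ),
        ((∑ i ∈ Finset.range (M+1),
          (cA N M P i * (b₁^(N+M+P+1-i) * Real.exp (-(z₁*b₁)))) * (b₂^i * Real.exp (-(z₂*b₂))))
        + ∑ i ∈ Finset.range (P+1),
          ((if b₂ < b₁ then (b₁-b₂)^(N+M+P+1-i) else 0) * Real.exp (-(z₁*b₁)))
            * (cB N M P i * (b₂^i * Real.exp (-(z₂*b₂))))))
      = (∑ i ∈ Finset.range (M+1),
          (cA N M P i * (b₁^(N+M+P+1-i) * Real.exp (-(z₁*b₁)))) * ((i.factorial:ℝ)/z₂^(i+1)))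
        + ∑ i ∈ Finset.range (P+1), ∫ b₂ in Ioi (0:ℝ),
          ((if b₂ < b₁ then (b₁-b₂)^(N+M+P+1-i) else 0) * Real.exp (-(z₁*b₁)))
            * (cB N M P i * (b₂^i * Real.exp (-(z₂*b₂)))) := by
    intro b₁
    have hAi : ∀ i, Integrable (fun b₂ : ℝ =>
        (cA N M P i * (b₁^(N+M+P+1-i) * Real.exp (-(z₁*b₁)))) * (b₂^i * Real.exp (-(z₂*b₂))))
        (volume.restrict (Ioi 0)) :=
      fun i => ((lap_integrable i h₂).const_mul _)
    have hBi : ∀ i, Integrable (fun b₂ : ℝ =>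
        ((if b₂ < b₁ then (b₁-b₂)^(N+M+P+1-i) else 0) * Real.exp (-(z₁*b₁)))
          * (cB N M P i * (b₂^i * Real.exp (-(z₂*b₂)))))
        (volume.restrict (Ioi 0)) := by
      intro i
      have hm2 : Measurable (fun b₂ : ℝ =>
          ((if b₂ < b₁ then (b₁-b₂)^(N+M+P+1-i) else 0) * Real.exp (-(z₁*b₁)))
            * (cB N M P i * (b₂^i * Real.exp (-(z₂*b₂))))) := by
        refine Measurable.mul (Measurable.mul ?_ measurable_const) ?_
        · exact Measurable.ite (measurableSet_lt measurable_id measurable_const)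
            ((measurable_const.sub measurable_id).pow_const _) measurable_const
        · exact (((measurable_id.pow_const i).mul
            (((measurable_id.const_mul z₂).neg).exp))).const_mul _
      refine ((lap_integrable i h₂).const_mul
        (|b₁|^(N+M+P+1-i) * Real.exp (-(z₁*b₁)) * |cB N M P i|)).mono'
        hm2.aestronglyMeasurable ?_
      filter_upwards [ae_restrict_mem measurableSet_Ioi] with b₂ hb₂
      simp only [Set.mem_Ioi] at hb₂
      have h1 : |(if b₂ < b₁ then (b₁-b₂)^(N+M+P+1-i) else 0)| ≤ |b₁|^(N+M+P+1-i) := by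
        split_ifs with h
        · rw [abs_pow]
          have hb1 : (0:ℝ) < b₁ := lt_trans hb₂ h
          have hle : |b₁ - b₂| ≤ |b₁| := by
            rw [abs_of_nonneg (by linarith : (0:ℝ) ≤ b₁ - b₂), abs_of_pos hb1]
            linarith
          exact pow_le_pow_left₀ (abs_nonneg _) hle _
        · simp [abs_nonneg]
      calc ‖((if b₂ < b₁ then (b₁-b₂)^(N+M+P+1-i) else 0) * Real.exp (-(z₁*b₁)))
            * (cB N M P i * (b₂^i * Real.exp (-(z₂*b₂))))‖
          = (|(if b₂ < b₁ then (b₁-b₂)^(N+M+P+1-i) else 0)| * Real.exp (-(z₁*b₁)))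
            * (|cB N M P i| * (b₂^i * Real.exp (-(z₂*b₂)))) := by
            rw [Real.norm_eq_abs, abs_mul, abs_mul, abs_mul, abs_mul,
              abs_of_pos (Real.exp_pos _), abs_of_pos (Real.exp_pos _),
              abs_of_nonneg (pow_nonneg hb₂.le i)]
        _ ≤ (|b₁|^(N+M+P+1-i) * Real.exp (-(z₁*b₁)))
            * (|cB N M P i| * (b₂^i * Real.exp (-(z₂*b₂)))) := by
            refine mul_le_mul_of_nonneg_right
              (mul_le_mul_of_nonneg_right h1 (Real.exp_pos _).le) ?_
            exact mul_nonneg (abs_nonneg _)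
              (mul_nonneg (pow_nonneg hb₂.le i) (Real.exp_pos _).le)
        _ = |b₁|^(N+M+P+1-i) * Real.exp (-(z₁*b₁)) * |cB N M P i|
            * (b₂^i * Real.exp (-(z₂*b₂))) := by ring
    rw [integral_add (integrable_finset_sum _ (fun i _ => hAi i))
        (integrable_finset_sum _ (fun i _ => hBi i)),
      integral_finset_sum _ (fun i _ => hAi i), integral_finset_sum _ (fun i _ => hBi i)]
    congr 1
    refine Finset.sum_congr rfl fun i _ => ?_
    rw [MeasureTheory.integral_const_mul, lap_eval i h₂]
  simp only [hinner]
  have hOA : ∀ i, Integrable (fun b₁ : ℝ =>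
      (cA N M P i * (b₁^(N+M+P+1-i) * Real.exp (-(z₁*b₁)))) * ((i.factorial:ℝ)/z₂^(i+1)))
      (volume.restrict (Ioi 0)) :=
    fun i => ((lap_integrable _ h₁).const_mul _).mul_const _
  have hOB : ∀ i, Integrable (fun b₁ : ℝ => ∫ b₂ in Ioi (0:ℝ),
      ((if b₂ < b₁ then (b₁-b₂)^(N+M+P+1-i) else 0) * Real.exp (-(z₁*b₁)))
        * (cB N M P i * (b₂^i * Real.exp (-(z₂*b₂)))))
      (volume.restrict (Ioi 0)) :=
    fun i => (termB_prod_integrable _ i h₁ h₂ _).integral_prod_left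
  rw [integral_add (integrable_finset_sum _ fun i _ => hOA i)
      (integrable_finset_sum _ fun i _ => hOB i),
    integral_finset_sum _ (fun i _ => hOA i), integral_finset_sum _ (fun i _ => hOB i)]
  have hevalA : ∀ i : ℕ, (∫ b₁ in Ioi (0:ℝ),
      (cA N M P i * (b₁^(N+M+P+1-i) * Real.exp (-(z₁*b₁)))) * ((i.factorial:ℝ)/z₂^(i+1)))
      = cA N M P i * (((N+M+P+1-i).factorial:ℝ)/z₁^((N+M+P+1-i)+1)) * ((i.factorial:ℝ)/z₂^(i+1)) := by
    intro i
    rw [integral_mul_const, MeasureTheory.integral_const_mul, lap_eval _ h₁]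
  have hevalB : ∀ i : ℕ, (∫ b₁ in Ioi (0:ℝ), ∫ b₂ in Ioi (0:ℝ),
      ((if b₂ < b₁ then (b₁-b₂)^(N+M+P+1-i) else 0) * Real.exp (-(z₁*b₁)))
        * (cB N M P i * (b₂^i * Real.exp (-(z₂*b₂)))))
      = cB N M P i * (((N+M+P+1-i).factorial:ℝ)/z₁^((N+M+P+1-i)+1)) * ((i.factorial:ℝ)/(z₁+z₂)^(i+1)) :=
    fun i => termB_eval _ i h₁ h₂ _
  simp only [hevalA, hevalB]
  rw [show N+M+P+3-(N+1)-(M+1) = P+1 by omega]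
  exact final_alg N M P z₁ z₂ h₁ h₂
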